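/- Let c > 0, d ≥ 0, and d_max > 0 be real numbers and let K ≥ 1 be a natural number. Set r_0 = d_max·K^{−1/(d+2)}. Then (K·r_0)/d_max + ∑_{i ∈ ℕ : d_max·2^{−i} ≥ r_0} c·(d_max·2^{−i})^{−d} · (d_max/(d_max·2^{−i})) ≤ (1 + 2·c·d_max^{−d}) · K^{(d+1)/(d+2)}. -/

import Mathlib

theorem stmt_17 (c d dmax : ℝ) (hc : 0 < c) (hd : 0 ≤ d) (hdmax : 0 < dmax)
    (K : ℕ) (hK : 1 ≤ K)
    (r₀ : ℝ) (hr₀ : r₀ = dmax * (K : ℝ) ^ (-(1 / (d + 2)))) :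
    (K : ℝ) * r₀ / dmax +
      (∑' i : ℕ, if r₀ ≤ dmax * (2 : ℝ) ^ (-(i : ℝ)) then
          c * (dmax * (2 : ℝ) ^ (-(i : ℝ))) ^ (-d) *
            (dmax / (dmax * (2 : ℝ) ^ (-(i : ℝ))))
        else 0)
      ≤ (1 + 2 * c * dmax ^ (-d)) * (K : ℝ) ^ ((d + 1) / (d + 2)) := by
  have hK1 : (1:ℝ) ≤ (K:ℝ) := by exact_mod_cast hK
  have hK0 : (0:ℝ) < (K:ℝ) := by linarith
  have hd2 : (0:ℝ) < d + 2 := by linarith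
  set M : ℝ := (K:ℝ) ^ (1/(d+2)) with hM
  have hM1 : (1:ℝ) ≤ M := Real.one_le_rpow hK1 (by positivity)
  have hM0 : (0:ℝ) < M := by linarith
  have hn1 : 1 ≤ ⌊M⌋₊ := Nat.le_floor (by simpa using hM1)
  set n := ⌊M⌋₊ with hn
  set I := Nat.log 2 n with hI
  have hr₀' : r₀ = dmax * M⁻¹ := by
    rw [hr₀, Real.rpow_neg (le_of_lt hK0)]
  have hcond : ∀ i : ℕ, (r₀ ≤ dmax * (2:ℝ)^(-(i:ℝ))) ↔ i ≤ I := by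
    intro i
    rw [hr₀', mul_le_mul_iff_right₀ hdmax, Real.rpow_neg (by norm_num : (0:ℝ) ≤ 2),
      inv_le_inv₀ hM0 (by positivity)]
    rw [Real.rpow_natCast]
    constructor
    · intro h
      have h2 : (2:ℕ)^i ≤ n := Nat.le_floor (by push_cast; exact h)
      exact (Nat.le_log_iff_pow_le (by norm_num) (by omega)).mpr h2
    · intro h
      have h2 : (2:ℕ)^i ≤ n := (Nat.le_log_iff_pow_le (by norm_num) (by omega)).mp h
      calc ((2:ℝ))^i = ((2^i : ℕ) : ℝ) := by push_cast; ring
        _ ≤ (n:ℝ) := by exact_mod_cast h2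
        _ ≤ M := Nat.floor_le hM0.le
  set q : ℝ := (2:ℝ) ^ (d+1) with hq
  have hq2 : (2:ℝ) ≤ q := by
    calc (2:ℝ) = (2:ℝ)^(1:ℝ) := (Real.rpow_one 2).symm
      _ ≤ q := Real.rpow_le_rpow_of_exponent_le (by norm_num) (by linarith)
  have hq0 : (0:ℝ) < q := by linarith
  have hterm : ∀ i : ℕ,
      c * (dmax * (2:ℝ)^(-(i:ℝ)))^(-d) * (dmax / (dmax * (2:ℝ)^(-(i:ℝ))))
        = c * dmax^(-d) * q^i := by
    intro i
    have ht0 : (0:ℝ) < (2:ℝ)^(-(i:ℝ)) := Real.rpow_pos_of_pos (by norm_num) _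
    have h1 : dmax / (dmax * (2:ℝ)^(-(i:ℝ))) = ((2:ℝ)^(-(i:ℝ)))⁻¹ := by
      field_simp
    have h2 : (0:ℝ) ≤ 2 := by norm_num
    rw [h1, Real.mul_rpow hdmax.le ht0.le,
      ← Real.rpow_natCast q i, hq,
      ← Real.rpow_neg_one ((2:ℝ)^(-(i:ℝ))),
      ← Real.rpow_mul h2, ← Real.rpow_mul h2, ← Real.rpow_mul h2]
    have hh : (2:ℝ)^(-(i:ℝ)*(-d)) * (2:ℝ)^(-(i:ℝ)*(-1)) = (2:ℝ)^((d+1)*(i:ℝ)) := by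
      rw [← Real.rpow_add (by norm_num : (0:ℝ) < 2)]
      ring_nf
    calc c * (dmax^(-d) * (2:ℝ)^(-(i:ℝ)*(-d))) * (2:ℝ)^(-(i:ℝ)*(-1))
        = c * dmax^(-d) * ((2:ℝ)^(-(i:ℝ)*(-d)) * (2:ℝ)^(-(i:ℝ)*(-1))) := by ring
      _ = c * dmax^(-d) * (2:ℝ)^((d+1)*(i:ℝ)) := by rw [hh]
  have hsupp : ∀ i ∉ Finset.range (I+1),
      (if r₀ ≤ dmax * (2:ℝ)^(-(i:ℝ)) then
        c * (dmax * (2:ℝ)^(-(i:ℝ)))^(-d) * (dmax / (dmax * (2:ℝ)^(-(i:ℝ))))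
      else 0) = 0 := by
    intro i hi
    rw [Finset.mem_range] at hi
    rw [if_neg]
    rw [hcond]
    omega
  rw [tsum_eq_sum hsupp]
  -- bound the finite sum
  have hsum : ∑ i ∈ Finset.range (I+1),
      (if r₀ ≤ dmax * (2:ℝ)^(-(i:ℝ)) then
        c * (dmax * (2:ℝ)^(-(i:ℝ)))^(-d) * (dmax / (dmax * (2:ℝ)^(-(i:ℝ))))
      else 0) ≤ c * dmax^(-d) * ∑ i ∈ Finset.range (I+1), q^i := by
    rw [Finset.mul_sum]
    apply Finset.sum_le_sum
    intro i hi
    split_ifs with h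
    · rw [hterm i]
    · positivity
  have hgeom : ∑ i ∈ Finset.range (I+1), q^i ≤ 2 * q^I := by
    rw [geom_sum_eq (by linarith : q ≠ 1)]
    rw [div_le_iff₀ (by linarith : (0:ℝ) < q - 1)]
    have hqI : (0:ℝ) < q^I := by positivity
    rw [pow_succ]
    nlinarith
  have hqIM : q^I ≤ (K:ℝ) ^ ((d+1)/(d+2)) := by
    have h2I : ((2:ℝ))^I ≤ M := by
      calc ((2:ℝ))^I = ((2^I : ℕ) : ℝ) := by push_cast; ring
        _ ≤ (n:ℝ) := by exact_mod_cast Nat.pow_log_le_self 2 (by omega)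
        _ ≤ M := Nat.floor_le hM0.le
    have : q^I = ((2:ℝ)^(I:ℕ) : ℝ) ^ (d+1) := by
      rw [hq, ← Real.rpow_natCast ((2:ℝ)^(d+1)) I,
        ← Real.rpow_mul (by norm_num : (0:ℝ) ≤ 2),
        ← Real.rpow_natCast (2:ℝ) I,
        ← Real.rpow_mul (by norm_num : (0:ℝ) ≤ 2)]
      ring_nf
    rw [this]
    calc ((2:ℝ)^(I:ℕ)) ^ (d+1) ≤ M ^ (d+1) :=
          Real.rpow_le_rpow (by positivity) h2I (by linarith)
      _ = (K:ℝ) ^ ((d+1)/(d+2)) := by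
          rw [hM, ← Real.rpow_mul hK0.le]
          congr 1
          field_simp
  have hfirst : (K:ℝ) * r₀ / dmax = (K:ℝ) ^ ((d+1)/(d+2)) := by
    have hKK : (K:ℝ) * ((K:ℝ) ^ (-(1/(d+2)))) = (K:ℝ)^((d+1)/(d+2)) := by
      nth_rewrite 1 [← Real.rpow_one (K:ℝ)]
      rw [← Real.rpow_add hK0]
      congr 1
      field_simp
      ring
    rw [hr₀, mul_comm dmax _, ← mul_assoc, mul_div_assoc, div_self hdmax.ne',
      mul_one, hKK]
  have hA : (0:ℝ) < c * dmax^(-d) := by positivity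
  have hP : (0:ℝ) < (K:ℝ) ^ ((d+1)/(d+2)) := Real.rpow_pos_of_pos hK0 _
  rw [hfirst]
  have h2 : c * dmax^(-d) * ∑ i ∈ Finset.range (I+1), q^i
      ≤ c * dmax^(-d) * (2 * (K:ℝ) ^ ((d+1)/(d+2))) := by
    apply mul_le_mul_of_nonneg_left _ hA.le
    calc ∑ i ∈ Finset.range (I+1), q^i ≤ 2 * q^I := hgeom
      _ ≤ 2 * (K:ℝ) ^ ((d+1)/(d+2)) := by linarith
  nlinarith [hsum]
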